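/- arXiv:0707.3764 — 2 statements merged into one kernel-verified Lean document; each statement's English description precedes it below -/
import Mathlib

section
/- For the general slip function F(v) = A₁(1 + A₂/(1 + A₃v²))v with A₁, A₃ > 0, F is non-monotonic on (0,∞) (i.e., F' vanishes somewhere) if and only if A₂ > 8. -/
/-- For the slip function `F(v) = A₁(1 + A₂/(1 + A₃ v²)) v` with `A₁, A₂, A₃ > 0`,
`F` is non-monotonic on `(0, ∞)` if and only if `A₂ > 8`. -/
theorem stmt_1 (A₁ A₂ A₃ : ℝ) (hA₁ : 0 < A₁) (hA₂ : 0 < A₂) (hA₃ : 0 < A₃)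
    (F : ℝ → ℝ) (hF : ∀ v, F v = A₁ * (1 + A₂ / (1 + A₃ * v ^ 2)) * v) :
    ¬ MonotoneOn F (Set.Ioi (0 : ℝ)) ↔ 8 < A₂ := by
  have hFe : F = fun v => A₁ * (1 + A₂ / (1 + A₃ * v ^ 2)) * v := funext hF
  subst hFe
  have hupos : ∀ v : ℝ, 0 < 1 + A₃ * v ^ 2 := fun v => by positivity
  have hD : ∀ v : ℝ, HasDerivAt (fun v => A₁ * (1 + A₂ / (1 + A₃ * v ^ 2)) * v)
      (A₁ * (((A₃ * v ^ 2) ^ 2 + (2 - A₂) * (A₃ * v ^ 2) + 1 + A₂)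
        / (1 + A₃ * v ^ 2) ^ 2)) v := by
    intro v
    have hu : HasDerivAt (fun v : ℝ => 1 + A₃ * v ^ 2) (A₃ * (2 * v ^ 1)) v :=
      ((hasDerivAt_pow 2 v).const_mul A₃).const_add 1
    have hq := (hasDerivAt_const v A₂).div hu (hupos v).ne'
    have h1 := ((hq.const_add 1).mul (hasDerivAt_id v)).const_mul A₁
    have hne := (hupos v).ne'
    convert h1 using 1
    case e'_8 =>
      funext y
      simp only [Pi.mul_apply, Pi.div_apply, id]
      ring
    case e'_9 =>
      simp only [Pi.div_apply, id]
      field_simp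
      ring
    all_goals exact rfl
  rw [show (8 < A₂) ↔ ¬(A₂ ≤ 8) from not_le.symm, not_iff_not]
  constructor
  · -- Monotone → A₂ ≤ 8
    intro hmono
    by_contra h8
    push_neg at h8
    set v₀ : ℝ := Real.sqrt ((A₂ - 2) / (2 * A₃)) with hv₀def
    have hx : A₃ * v₀ ^ 2 = (A₂ - 2) / 2 := by
      rw [hv₀def, Real.sq_sqrt (div_nonneg (by linarith) (by positivity))]
      field_simp
    have hv₀pos : 0 < v₀ := Real.sqrt_pos.2 (div_pos (by linarith) (by positivity))
    -- derivative at v₀ is nonneg by monotonicity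
    have hslope : Filter.Tendsto (slope (fun v => A₁ * (1 + A₂ / (1 + A₃ * v ^ 2)) * v) v₀)
        (nhdsWithin v₀ (Set.Ioi v₀))
        (nhds (A₁ * (((A₃ * v₀ ^ 2) ^ 2 + (2 - A₂) * (A₃ * v₀ ^ 2) + 1 + A₂)
          / (1 + A₃ * v₀ ^ 2) ^ 2))) := by
      refine (hasDerivAt_iff_tendsto_slope.1 (hD v₀)).mono_left
        (nhdsWithin_mono _ ?_)
      intro x hx
      exact (ne_of_gt hx)
    have hnonneg : 0 ≤ A₁ * (((A₃ * v₀ ^ 2) ^ 2 + (2 - A₂) * (A₃ * v₀ ^ 2) + 1 + A₂)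
        / (1 + A₃ * v₀ ^ 2) ^ 2) := by
      refine ge_of_tendsto hslope ?_
      filter_upwards [self_mem_nhdsWithin] with x hxmem
      have hxv : v₀ < x := hxmem
      have hF : (fun v => A₁ * (1 + A₂ / (1 + A₃ * v ^ 2)) * v) v₀
          ≤ (fun v => A₁ * (1 + A₂ / (1 + A₃ * v ^ 2)) * v) x :=
        hmono (Set.mem_Ioi.2 hv₀pos) (Set.mem_Ioi.2 (hv₀pos.trans hxv)) hxv.le
      have : (0:ℝ) < x - v₀ := by linarith
      rw [slope_def_field]
      exact div_nonneg (by simpa using sub_nonneg.2 hF) this.le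
    rw [hx] at hnonneg
    have hqneg : ((A₂ - 2) / 2) ^ 2 + (2 - A₂) * ((A₂ - 2) / 2) + 1 + A₂ < 0 := by
      nlinarith
    have hdiv : (((A₂ - 2) / 2) ^ 2 + (2 - A₂) * ((A₂ - 2) / 2) + 1 + A₂)
        / (1 + (A₂ - 2) / 2) ^ 2 < 0 :=
      div_neg_of_neg_of_pos hqneg (pow_pos (by linarith) 2)
    linarith [mul_neg_of_pos_of_neg hA₁ hdiv]
  · -- A₂ ≤ 8 → Monotone
    intro h8
    refine monotoneOn_of_deriv_nonneg (convex_Ioi 0) ?_ ?_ ?_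
    · exact fun v _ => ((hD v).continuousAt).continuousWithinAt
    · intro v _
      exact ((hD v).differentiableAt).differentiableWithinAt
    · intro v hv
      rw [(hD v).deriv]
      have hq : 0 ≤ (A₃ * v ^ 2) ^ 2 + (2 - A₂) * (A₃ * v ^ 2) + 1 + A₂ := by
        nlinarith [sq_nonneg (A₃ * v ^ 2 - (A₂ - 2) / 2), sq_nonneg (A₃ * v ^ 2), sq_nonneg v]
      positivity
end

section
/- For the slip law F(v) = A₁(1 + A₂/(1+A₃v²))v with A₁, A₃ > 0, the flow curve Q(v) = v + F(v)/3 is non-monotonic on (0,∞) if and only if A₂ > 8(1 + 3/A₁). -/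
/-- For the slip law `F(v) = A₁(1 + A₂/(1 + A₃ v²)) v` with `A₁, A₂, A₃ > 0`, the flow curve
`Q(v) = v + F(v)/3` is non-monotonic on `(0, ∞)` (i.e. `Q' < 0` somewhere on `(0,∞)`)
if and only if `A₂ > 8(1 + 3/A₁)`. -/
theorem stmt_7 (A₁ A₂ A₃ : ℝ) (hA₁ : 0 < A₁) (hA₂ : 0 < A₂) (hA₃ : 0 < A₃)
    (F Q : ℝ → ℝ)
    (hF : ∀ v, F v = A₁ * (1 + A₂ / (1 + A₃ * v ^ 2)) * v)
    (hQ : ∀ v, Q v = v + F v / 3) :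
    (∃ v : ℝ, 0 < v ∧ deriv Q v < 0) ↔ 8 * (1 + 3 / A₁) < A₂ := by
  have hQfun : Q = fun v => v + (A₁ * (1 + A₂ / (1 + A₃ * v ^ 2)) * v) / 3 :=
    funext fun v => by rw [hQ, hF]
  have hden : ∀ v : ℝ, (0:ℝ) < 1 + A₃ * v ^ 2 := fun v => by positivity
  -- derivative formula
  have hderiv : ∀ v : ℝ, deriv Q v =
      (3 * (1 + A₃ * v ^ 2) ^ 2 + A₁ * ((1 + A₃ * v ^ 2) ^ 2 + A₂ * (1 - A₃ * v ^ 2)))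
        / (3 * (1 + A₃ * v ^ 2) ^ 2) := by
    intro v
    have h1 : HasDerivAt (fun v : ℝ => 1 + A₃ * v ^ 2) (A₃ * (2 * v)) v := by
      simpa using (((hasDerivAt_pow 2 v)).const_mul A₃).const_add 1
    have h2 : HasDerivAt (fun v : ℝ => 1 + A₂ / (1 + A₃ * v ^ 2))
        ((0 * (1 + A₃ * v ^ 2) - A₂ * (A₃ * (2 * v))) / (1 + A₃ * v ^ 2) ^ 2) v :=
      (((hasDerivAt_const v A₂).div h1 (ne_of_gt (hden v)))).const_add 1
    have h3 : HasDerivAt (fun v : ℝ => A₁ * (1 + A₂ / (1 + A₃ * v ^ 2)) * v)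
        (A₁ * ((0 * (1 + A₃ * v ^ 2) - A₂ * (A₃ * (2 * v))) / (1 + A₃ * v ^ 2) ^ 2) * v
          + A₁ * (1 + A₂ / (1 + A₃ * v ^ 2)) * 1) v := by
      exact (h2.const_mul A₁).mul (hasDerivAt_id' v)
    have h4 : HasDerivAt Q
        (1 + (A₁ * ((0 * (1 + A₃ * v ^ 2) - A₂ * (A₃ * (2 * v))) / (1 + A₃ * v ^ 2) ^ 2) * v
          + A₁ * (1 + A₂ / (1 + A₃ * v ^ 2)) * 1) / 3) v := by
      rw [hQfun]
      exact (hasDerivAt_id v).add (h3.div_const 3)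
    rw [h4.deriv]
    have hne : (1 + A₃ * v ^ 2) ≠ 0 := ne_of_gt (hden v)
    field_simp
    ring
  constructor
  · rintro ⟨v, hv, hlt⟩
    rw [hderiv v] at hlt
    set u := A₃ * v ^ 2 with hu
    have hu0 : 0 < u := by positivity
    have hd : (0:ℝ) < 1 + u := by linarith
    have hnum : 3 * (1 + u) ^ 2 + A₁ * ((1 + u) ^ 2 + A₂ * (1 - u)) < 0 := by
      by_contra h
      push_neg at h
      have : (0:ℝ) ≤ (3 * (1 + u) ^ 2 + A₁ * ((1 + u) ^ 2 + A₂ * (1 - u)))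
          / (3 * (1 + u) ^ 2) := div_nonneg h (by positivity)
      linarith
    have key : 24 + 8 * A₁ < A₁ * A₂ := by
      nlinarith [mul_pos hA₁ hA₂, mul_nonneg (mul_pos hA₁ hA₂).le (sq_nonneg (u - 3)), sq_nonneg (1 + u)]
    rw [show (8:ℝ) * (1 + 3 / A₁) = (24 + 8 * A₁) / A₁ by field_simp; ring]
    rw [div_lt_iff₀ hA₁]
    linarith [key, mul_comm A₁ A₂]
  · intro h
    refine ⟨Real.sqrt (3 / A₃), Real.sqrt_pos.mpr (by positivity), ?_⟩
    have hsq : A₃ * Real.sqrt (3 / A₃) ^ 2 = 3 := by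
      rw [Real.sq_sqrt (by positivity : (0:ℝ) ≤ 3 / A₃)]
      field_simp
    rw [hderiv, hsq]
    have key : 24 + 8 * A₁ < A₁ * A₂ := by
      have h' : (24 + 8 * A₁) / A₁ < A₂ := by
        rw [show (24 + 8 * A₁) / A₁ = 8 * (1 + 3 / A₁) by field_simp; ring]; exact h
      calc 24 + 8 * A₁ = (24 + 8 * A₁) / A₁ * A₁ := by field_simp
        _ < A₂ * A₁ := by exact mul_lt_mul_of_pos_right h' hA₁
        _ = A₁ * A₂ := mul_comm _ _
    apply div_neg_of_neg_of_pos
    · nlinarith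
    · norm_num
end
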